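/- Let Y = {y_1,...,y_d} be linearly independent vectors in R^d with matrix 𝒴, let L ⊂ R^d be a full-rank lattice, M = 𝒴^{-1}L, and L(Y) = L ∩ C(Y) where C(Y) = 𝒴·R^d_{≥0}. Then for each 1 ≤ i ≤ d, λ_i(M⁺)/(d|𝒴^{-1}|) ≤ λ_i(L(Y)) ≤ d|𝒴|·λ_i(M⁺), where |·| denotes the sup-norm of a matrix viewed as a vector in R^{d²}. -/

import Mathlib

/-- The `i`-th successive minimum of a set `S ⊆ ℝ^d` with respect to the unit sup-norm
cube. -/
noncomputable def succMin (d : ℕ) (S : Set (Fin d → ℝ)) (i : ℕ) : ℝ :=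
  sInf {t : ℝ | 0 < t ∧ ∃ v : Fin i → (Fin d → ℝ),
    (∀ k, v k ∈ S) ∧ LinearIndependent ℝ v ∧ ∀ k, ‖v k‖ ≤ t}

private lemma le_nA {d : ℕ} (A : Matrix (Fin d) (Fin d) ℝ) (k j : Fin d) :
    |A k j| ≤ ⨆ p : Fin d × Fin d, |A p.1 p.2| :=
  le_ciSup (f := fun p : Fin d × Fin d => |A p.1 p.2|)
    (Set.Finite.bddAbove (Set.finite_range _)) (k, j)

private lemma nA_pos {d : ℕ} (hd : 0 < d) (A : Matrix (Fin d) (Fin d) ℝ)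
    (hA : IsUnit A.det) : 0 < ⨆ p : Fin d × Fin d, |A p.1 p.2| := by
  have hne : Nonempty (Fin d) := ⟨⟨0, hd⟩⟩
  by_contra h
  push_neg at h
  have hz : A = 0 := by
    ext k j
    have h1 := le_nA A k j
    have := le_trans h1 h
    have := abs_nonneg (A k j)
    simp only [Matrix.zero_apply]
    exact abs_nonpos_iff.mp (le_trans h1 h)
  rw [hz, Matrix.det_zero] at hA
  exact hA.ne_zero rfl

private lemma mulVec_norm_le {d : ℕ} (hd : 0 < d) (A : Matrix (Fin d) (Fin d) ℝ)
    (x : Fin d → ℝ) :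
    ‖A.mulVec x‖ ≤ (d * ⨆ p : Fin d × Fin d, |A p.1 p.2|) * ‖x‖ := by
  have hne : Nonempty (Fin d) := ⟨⟨0, hd⟩⟩
  set nA := ⨆ p : Fin d × Fin d, |A p.1 p.2| with hnAdef
  have hnA : 0 ≤ nA := le_trans (abs_nonneg _) (le_nA A ⟨0, hd⟩ ⟨0, hd⟩)
  rw [pi_norm_le_iff_of_nonneg (by positivity)]
  intro k
  have : A.mulVec x k = ∑ j, A k j * x j := by
    simp [Matrix.mulVec, dotProduct]
  rw [Real.norm_eq_abs, this]
  calc |∑ j, A k j * x j| ≤ ∑ j, |A k j * x j| := Finset.abs_sum_le_sum_abs _ _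
    _ ≤ ∑ _j : Fin d, nA * ‖x‖ := by
        apply Finset.sum_le_sum
        intro j _
        rw [abs_mul]
        exact mul_le_mul (le_nA A k j) (norm_le_pi_norm x j) (abs_nonneg _) hnA
    _ = (d * nA) * ‖x‖ := by
        rw [Finset.sum_const, Finset.card_univ, Fintype.card_fin, nsmul_eq_mul]
        ring

private lemma mulVec_li {d i : ℕ} (A : Matrix (Fin d) (Fin d) ℝ) (hA : IsUnit A.det)
    (v : Fin i → (Fin d → ℝ)) (hv : LinearIndependent ℝ v) :
    LinearIndependent ℝ (fun k => A.mulVec (v k)) := by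
  have hinj : Function.Injective (Matrix.mulVecLin A) := by
    intro x y h
    have h2 := congrArg (fun z => A⁻¹.mulVec z) h
    simpa [Matrix.mulVecLin_apply, Matrix.mulVec_mulVec, Matrix.nonsing_inv_mul A hA,
      Matrix.one_mulVec] using h2
  have := hv.map' (Matrix.mulVecLin A) (LinearMap.ker_eq_bot.mpr hinj)
  exact this

/-- Transfer of successive-minima witnesses along multiplication by a matrix. -/
private lemma mem_transfer {d i : ℕ} (hd : 0 < d) (S T : Set (Fin d → ℝ))
    (A : Matrix (Fin d) (Fin d) ℝ) (hA : IsUnit A.det)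
    (hmap : ∀ v ∈ S, A.mulVec v ∈ T) (t : ℝ)
    (ht : t ∈ {t : ℝ | 0 < t ∧ ∃ v : Fin i → (Fin d → ℝ),
      (∀ k, v k ∈ S) ∧ LinearIndependent ℝ v ∧ ∀ k, ‖v k‖ ≤ t}) :
    ((d * ⨆ p : Fin d × Fin d, |A p.1 p.2|) * t) ∈ {t : ℝ | 0 < t ∧
      ∃ v : Fin i → (Fin d → ℝ),
      (∀ k, v k ∈ T) ∧ LinearIndependent ℝ v ∧ ∀ k, ‖v k‖ ≤ t} := by
  obtain ⟨htpos, v, hvS, hvli, hvn⟩ := ht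
  have hnA := nA_pos hd A hA
  refine ⟨by positivity, fun k => A.mulVec (v k), fun k => hmap _ (hvS k),
    mulVec_li A hA v hvli, fun k => ?_⟩
  calc ‖A.mulVec (v k)‖ ≤ (d * ⨆ p : Fin d × Fin d, |A p.1 p.2|) * ‖v k‖ :=
        mulVec_norm_le hd A (v k)
    _ ≤ (d * ⨆ p : Fin d × Fin d, |A p.1 p.2|) * t := by
        apply mul_le_mul_of_nonneg_left (hvn k)
        positivity

/-- Let `Y ∈ GL_d(ℝ)`, `L = B·ℤ^d` a full-rank lattice, `M = Y⁻¹L` and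
`L(Y) = L ∩ Y·ℝ^d_{≥0}`. Then for each `1 ≤ i ≤ d`,
`λ_i(M⁺)/(d·|Y⁻¹|) ≤ λ_i(L(Y)) ≤ d·|Y|·λ_i(M⁺)`, where `|·|` is the sup-norm of a
matrix viewed as a vector in `ℝ^{d²}`. -/
theorem successive_minima_general_cone (d : ℕ) (hd : 0 < d)
    (Y : Matrix (Fin d) (Fin d) ℝ) (hY : IsUnit Y.det)
    (B : Matrix (Fin d) (Fin d) ℝ) (hB : IsUnit B.det)
    (i : ℕ) (hi1 : 1 ≤ i) (hid : i ≤ d) :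
    let L : Set (Fin d → ℝ) := {v | ∃ a : Fin d → ℤ, v = B.mulVec (fun j => (a j : ℝ))}
    let M : Set (Fin d → ℝ) := {v | ∃ w ∈ L, v = Y⁻¹.mulVec w}
    let LY : Set (Fin d → ℝ) :=
      {v ∈ L | ∃ c : Fin d → ℝ, (∀ k, 0 ≤ c k) ∧ v = Y.mulVec c}
    let Mplus : Set (Fin d → ℝ) := {v ∈ M | ∀ k, 0 ≤ v k}
    let nY : ℝ := ⨆ p : Fin d × Fin d, |Y p.1 p.2|
    let nYinv : ℝ := ⨆ p : Fin d × Fin d, |Y⁻¹ p.1 p.2|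
    succMin d Mplus i / (d * nYinv) ≤ succMin d LY i ∧
      succMin d LY i ≤ d * nY * succMin d Mplus i := by
  intro L M LY Mplus nY nYinv
  have hYinv : IsUnit Y⁻¹.det := Y.isUnit_nonsing_inv_det hY
  have hnY : (0:ℝ) < d * nY := by
    have := nA_pos hd Y hY
    have hd' : (0:ℝ) < d := by exact_mod_cast hd
    positivity
  have hnYinv : (0:ℝ) < d * nYinv := by
    have := nA_pos hd Y⁻¹ hYinv
    have hd' : (0:ℝ) < d := by exact_mod_cast hd
    positivity
  -- the two maps
  have hmap1 : ∀ v ∈ Mplus, Y.mulVec v ∈ LY := by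
    rintro v ⟨⟨w, hwL, rfl⟩, hpos⟩
    refine ⟨?_, fun k => Y⁻¹.mulVec w k, hpos, rfl⟩
    have : Y.mulVec (Y⁻¹.mulVec w) = w := by
      rw [Matrix.mulVec_mulVec, Matrix.mul_nonsing_inv Y hY, Matrix.one_mulVec]
    rw [this]; exact hwL
  have hmap2 : ∀ v ∈ LY, Y⁻¹.mulVec v ∈ Mplus := by
    rintro v ⟨hvL, c, hc, rfl⟩
    have hcancel : Y⁻¹.mulVec (Y.mulVec c) = c := by
      rw [Matrix.mulVec_mulVec, Matrix.nonsing_inv_mul Y hY, Matrix.one_mulVec]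
    exact ⟨⟨Y.mulVec c, hvL, rfl⟩, by rw [hcancel]; exact hc⟩
  set SM := {t : ℝ | 0 < t ∧ ∃ v : Fin i → (Fin d → ℝ),
    (∀ k, v k ∈ Mplus) ∧ LinearIndependent ℝ v ∧ ∀ k, ‖v k‖ ≤ t} with hSMdef
  set SL := {t : ℝ | 0 < t ∧ ∃ v : Fin i → (Fin d → ℝ),
    (∀ k, v k ∈ LY) ∧ LinearIndependent ℝ v ∧ ∀ k, ‖v k‖ ≤ t} with hSLdef
  have eM : succMin d Mplus i = sInf SM := rfl
  have eL : succMin d LY i = sInf SL := rfl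
  have trans1 : ∀ t ∈ SM, (↑d * nY) * t ∈ SL := fun t ht =>
    mem_transfer hd Mplus LY Y hY hmap1 t ht
  have trans2 : ∀ t ∈ SL, (↑d * nYinv) * t ∈ SM := fun t ht =>
    mem_transfer hd LY Mplus Y⁻¹ hYinv hmap2 t ht
  have bddSM : BddBelow SM := ⟨0, fun t ht => le_of_lt ht.1⟩
  have bddSL : BddBelow SL := ⟨0, fun t ht => le_of_lt ht.1⟩
  by_cases hSM : SM.Nonempty
  · obtain ⟨t0, ht0⟩ := hSM
    have hSL : SL.Nonempty := ⟨_, trans1 t0 ht0⟩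
    constructor
    · -- sInf SM ≤ (d*nYinv)*t for all t ∈ SL
      rw [eM, eL, div_le_iff₀ hnYinv]
      have h1 : sInf SM / (d * nYinv) ≤ sInf SL := by
        apply le_csInf hSL
        intro t ht
        rw [div_le_iff₀ hnYinv]
        calc sInf SM ≤ (↑d * nYinv) * t := csInf_le bddSM (trans2 t ht)
          _ = t * (↑d * nYinv) := by ring
      calc sInf SM = (sInf SM / (d * nYinv)) * (d * nYinv) := by rw [div_mul_cancel₀ _ hnYinv.ne']
        _ ≤ sInf SL * (d * nYinv) := by
            apply mul_le_mul_of_nonneg_right h1 (le_of_lt hnYinv)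
    · rw [eM, eL]
      have h1 : sInf SL / (d * nY) ≤ sInf SM := by
        apply le_csInf ⟨t0, ht0⟩
        intro t ht
        rw [div_le_iff₀ hnY]
        calc sInf SL ≤ (↑d * nY) * t := csInf_le bddSL (trans1 t ht)
          _ = t * (↑d * nY) := by ring
      calc sInf SL = (sInf SL / (d * nY)) * (d * nY) := by rw [div_mul_cancel₀ _ hnY.ne']
        _ ≤ sInf SM * (d * nY) := mul_le_mul_of_nonneg_right h1 (le_of_lt hnY)
        _ = ↑d * nY * sInf SM := by ring
  · have hSL : ¬ SL.Nonempty := by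
      rintro ⟨t, ht⟩
      exact hSM ⟨_, trans2 t ht⟩
    rw [Set.not_nonempty_iff_eq_empty] at hSM hSL
    rw [eM, eL, hSM, hSL, Real.sInf_empty]
    constructor
    · simp
    · simp
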